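/- arXiv:2104.06516 — 3 statements merged into one kernel-verified Lean document; each statement's English description precedes it below -/
import Mathlib

section
/- Let K be a field, V a K-vector space, and c ∈ V ⊗[K] V a copairing with induced map c♯ : Dual K V → V. Suppose there exists a linear map p : V → Dual K V satisfying the snake relation c♯ ∘ p = id_V (i.e., the copairing admits a compatible pairing). Then V is finite-dimensional over K, the map c♯ is bijective (so c is non-degenerate), and p is a two-sided inverse of c♯. -/
open TensorProduct

/-- The contraction map `c♯ : Dual K V → V` induced by a copairing `c ∈ V ⊗[K] V`:
it sends `ψ` to `Σᵢ ψ(xᵢ) • yᵢ` whenever `c = Σᵢ xᵢ ⊗ yᵢ`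
(see `copairingSharp_tmul`). -/
noncomputable def copairingSharp (K : Type*) [Field K] {V : Type*} [AddCommGroup V]
    [Module K V] (c : V ⊗[K] V) : Module.Dual K V →ₗ[K] V :=
  ((dualTensorHom K (Module.Dual K V) V).comp
    (TensorProduct.map (Module.Dual.eval K V) LinearMap.id)) c

/-- Characterization on simple tensors: `c♯(ψ) = ψ(x) • y` when `c = x ⊗ y`. -/
lemma copairingSharp_tmul (K : Type*) [Field K] {V : Type*} [AddCommGroup V]
    [Module K V] (x y : V) (ψ : Module.Dual K V) :
    copairingSharp K (x ⊗ₜ[K] y) ψ = ψ x • y := by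
  simp [copairingSharp]

lemma copairingSharp_range_fd (K : Type*) [Field K] {V : Type*} [AddCommGroup V]
    [Module K V] (c : V ⊗[K] V) :
    FiniteDimensional K (LinearMap.range (copairingSharp K c)) := by
  induction c using TensorProduct.induction_on with
  | zero =>
    have : copairingSharp K (0 : V ⊗[K] V) = 0 := map_zero _
    rw [this, LinearMap.range_zero]
    infer_instance
  | tmul x y =>
    have hle : LinearMap.range (copairingSharp K (x ⊗ₜ[K] y)) ≤ K ∙ y := by
      rintro v ⟨ψ, rfl⟩
      rw [copairingSharp_tmul]
      exact Submodule.smul_mem _ _ (Submodule.mem_span_singleton_self y)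
    exact Submodule.finiteDimensional_of_le hle
  | add a b ha hb =>
    have : copairingSharp K (a + b) = copairingSharp K a + copairingSharp K b :=
      map_add _ _ _
    have hle : LinearMap.range (copairingSharp K (a + b)) ≤
        LinearMap.range (copairingSharp K a) ⊔ LinearMap.range (copairingSharp K b) := by
      rintro v ⟨ψ, rfl⟩
      rw [this]
      exact Submodule.add_mem_sup (LinearMap.mem_range_self _ ψ)
        (LinearMap.mem_range_self _ ψ)
    exact Submodule.finiteDimensional_of_le hle

/-- if some linear map `p : V → Dual K V` satisfies the snake relation
`c♯ ∘ p = id`, then `V` is finite-dimensional, `c♯` is bijective (so `c` is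
non-degenerate), and `p` is a two-sided inverse of `c♯`. -/
theorem copairing_snake_relation (K : Type*) [Field K]
    {V : Type*} [AddCommGroup V] [Module K V] (c : V ⊗[K] V)
    (p : V →ₗ[K] Module.Dual K V)
    (hsnake : (copairingSharp K c).comp p = LinearMap.id) :
    FiniteDimensional K V ∧ Function.Bijective (copairingSharp K c) ∧
      (copairingSharp K c).comp p = LinearMap.id ∧
      p.comp (copairingSharp K c) = LinearMap.id := by
  have hsurj : Function.Surjective (copairingSharp K c) := by
    intro v
    exact ⟨p v, congrArg (fun f => f v) hsnake⟩
  have hrange : LinearMap.range (copairingSharp K c) = ⊤ :=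
    LinearMap.range_eq_top.mpr hsurj
  have hfd : FiniteDimensional K V := by
    have := copairingSharp_range_fd K c
    rw [hrange] at this
    exact (Submodule.topEquiv : (⊤ : Submodule K V) ≃ₗ[K] V).finiteDimensional
  have hrank : Module.finrank K (Module.Dual K V) = Module.finrank K V :=
    Subspace.dual_finrank_eq
  have hinj : Function.Injective (copairingSharp K c) :=
    ((LinearMap.injective_iff_surjective_of_finrank_eq_finrank hrank).mpr hsurj)
  have hleft : p.comp (copairingSharp K c) = LinearMap.id := by
    refine LinearMap.ext fun ψ => hinj ?_
    have := congrArg (fun f => f ((copairingSharp K c) ψ)) hsnake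
    simpa using this
  exact ⟨hfd, ⟨hinj, hsurj⟩, hsnake, hleft⟩
end

section
/- Let X be a topological space in which no connected component is compact (i.e., for every x ∈ X the connected component of x is not compact), let M be a type with a zero element, and let f : X → M be a locally constant function with compact support (the closure of the set {x | f x ≠ 0} is compact). Then f is identically zero. -/
/-- a locally constant, compactly supported function on a space in
which no connected component is compact is identically zero. -/
theorem isLocallyConstant_hasCompactSupport_eq_zero
    {X M : Type*} [TopologicalSpace X] [Zero M]
    (hX : ∀ x : X, ¬ IsCompact (connectedComponent x))
    (f : X → M) (hf : IsLocallyConstant f) (hsupp : HasCompactSupport f) :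
    f = 0 := by
  funext x
  by_contra hx
  apply hX x
  have hsub : connectedComponent x ⊆ tsupport f := fun y hy => by
    apply subset_tsupport
    have heq : f y = f x :=
      hf.apply_eq_of_isPreconnected isPreconnected_connectedComponent hy
        mem_connectedComponent
    simpa [heq] using hx
  exact hsupp.of_isClosed_subset isClosed_connectedComponent hsub
end

section
/- Let K be a field and A a unital associative K-algebra. Let c ∈ A ⊗[K] A be a copairing whose induced map c♯ : Dual K A → A has range consisting of nilpotent elements of A (c is entirely degenerate). If there exists a K-linear map p : A → Dual K A satisfying the snake relation c♯ ∘ p = id_A (i.e., a pairing compatible with the copairing exists), then A is the zero algebra: 1 = 0 in A. -/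
open TensorProduct

/-- if the copairing `c` on a unital associative `K`-algebra `A` is
entirely degenerate (the range of `c♯` consists of nilpotent elements) and there is
a linear map `p : A → Dual K A` with `c♯ ∘ p = id` (a compatible pairing), then `A`
is the zero algebra: `1 = 0` in `A`. -/
theorem zero_algebra_of_entirely_degenerate_and_pairing (K : Type*) [Field K]
    {A : Type*} [Ring A] [Algebra K A] (c : A ⊗[K] A)
    (hdeg : ∀ x ∈ LinearMap.range (copairingSharp K c), IsNilpotent x)
    (p : A →ₗ[K] Module.Dual K A)
    (hsnake : (copairingSharp K c).comp p = LinearMap.id) :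
    (1 : A) = 0 := by
  have h1 : copairingSharp K c (p 1) = 1 := by
    have := congrArg (fun f => f (1 : A)) hsnake
    simpa using this
  have hn : IsNilpotent (1 : A) := h1 ▸ hdeg _ ⟨p 1, rfl⟩
  obtain ⟨n, hn⟩ := hn
  simpa using hn
end
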